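/- arXiv:1807.01132 — 3 statements merged into one kernel-verified Lean document; each statement's English description precedes it below -/
import Mathlib

section
/- Let X = (X_1,…,X_n) be the occupancy vector of ⌊θn⌋ balls thrown independently uniformly into n bins with θ ∈ [0,1], assuming the Poisson comparison inequality P(X ∈ S) ≤ 2P(Y ∈ S) for monotone sets S with Y i.i.d. Poisson(θ). Then for any a ∈ {1,…,⌊θn⌋} and S ⊆ {1,…,n}: P(max_{m∈S} X_m < a) ≤ 2 exp(−θ^a |S| / (e·a!)). -/
open MeasureTheory ProbabilityTheory Real

/-- Lemma 2 of the paper: with `X` the occupancy vector of ⌊θn⌋ balls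
in `n` bins satisfying the Poisson comparison inequality against i.i.d. Poisson(θ)
variables `Y`, the probability that all bins of `S` have load below `a` is at most
`2 exp(−θ^a |S| / (e a!))`. -/
theorem stmt_12 {Ω : Type*} [MeasurableSpace Ω] (μ : Measure Ω) [IsProbabilityMeasure μ]
    (n : ℕ) (θ : ℝ) (hθ0 : 0 ≤ θ) (hθ1 : θ ≤ 1)
    (X Y : Fin n → Ω → ℕ) (hmeas : ∀ i, Measurable (Y i))
    (hindep : iIndepFun Y μ)
    (hY : ∀ i (k : ℕ), μ {ω | Y i ω = k}
      = ENNReal.ofReal (Real.exp (-θ) * θ ^ k / (k.factorial : ℝ)))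
    (hcomp : ∀ S : Set (Fin n → ℕ),
      (∀ x ∈ S, ∀ y : Fin n → ℕ, (∀ i, y i ≤ x i) → y ∈ S) →
      μ {ω | (fun m => X m ω) ∈ S} ≤ 2 * μ {ω | (fun m => Y m ω) ∈ S})
    (a : ℕ) (ha1 : 1 ≤ a) (ha2 : a ≤ ⌊θ * n⌋₊) (S : Finset (Fin n)) :
    μ {ω | ∀ m ∈ S, X m ω < a}
      ≤ ENNReal.ofReal
          (2 * Real.exp (-(θ ^ a * (S.card : ℝ) / (Real.exp 1 * (a.factorial : ℝ))))) := by
  set q : ℝ := Real.exp (-θ) * θ ^ a / (a.factorial : ℝ) with hqdef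
  set r : ℝ := θ ^ a / (Real.exp 1 * (a.factorial : ℝ)) with hrdef
  have hfac : (1 : ℝ) ≤ (a.factorial : ℝ) := by exact_mod_cast a.factorial_pos
  have hθa0 : 0 ≤ θ ^ a := pow_nonneg hθ0 a
  have hθa1 : θ ^ a ≤ 1 := pow_le_one₀ hθ0 hθ1
  have hq0 : 0 ≤ q := by
    apply div_nonneg (mul_nonneg (Real.exp_nonneg _) hθa0) (le_trans zero_le_one hfac)
  have hq1 : q ≤ 1 := by
    rw [hqdef, div_le_one (lt_of_lt_of_le zero_lt_one hfac)]
    calc Real.exp (-θ) * θ ^ a ≤ 1 * 1 := by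
          apply mul_le_mul _ hθa1 hθa0 zero_le_one
          simpa using Real.exp_le_one_iff.mpr (neg_nonpos.mpr hθ0)
      _ = 1 := one_mul 1
      _ ≤ (a.factorial : ℝ) := hfac
  have hr0 : 0 ≤ r := by
    apply div_nonneg hθa0 (mul_nonneg (Real.exp_nonneg _) (le_trans zero_le_one hfac))
  have hrq : r ≤ q := by
    rw [hrdef, hqdef, div_le_div_iff₀ (by positivity) (lt_of_lt_of_le zero_lt_one hfac)]
    rw [mul_comm (Real.exp (-θ)) (θ ^ a), mul_assoc]
    apply mul_le_mul_of_nonneg_left _ hθa0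
    calc (a.factorial : ℝ) = 1 * (a.factorial : ℝ) := (one_mul _).symm
      _ ≤ (Real.exp (-θ) * Real.exp 1) * (a.factorial : ℝ) := by
          apply mul_le_mul_of_nonneg_right _ (le_trans zero_le_one hfac)
          rw [← Real.exp_add]
          exact Real.one_le_exp (by linarith)
      _ = Real.exp (-θ) * (Real.exp 1 * (a.factorial : ℝ)) := by ring
  -- Step 1: comparison
  have hdown : ∀ x ∈ {x : Fin n → ℕ | ∀ m ∈ S, x m < a}, ∀ y : Fin n → ℕ,
      (∀ i, y i ≤ x i) → y ∈ {x : Fin n → ℕ | ∀ m ∈ S, x m < a} := by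
    intro x hx y hxy m hm
    exact lt_of_le_of_lt (hxy m) (hx m hm)
  have h1 : μ {ω | ∀ m ∈ S, X m ω < a} ≤ 2 * μ {ω | ∀ m ∈ S, Y m ω < a} :=
    hcomp {x : Fin n → ℕ | ∀ m ∈ S, x m < a} hdown
  -- Step 2: independence product
  have h2 : μ {ω | ∀ m ∈ S, Y m ω < a} = ∏ m ∈ S, μ {ω | Y m ω < a} := by
    have : {ω | ∀ m ∈ S, Y m ω < a} = ⋂ m ∈ S, {ω | Y m ω < a} := by
      ext ω; simp [Set.mem_iInter]
    rw [this]
    refine hindep.meas_biInter (fun i _ => ?_)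
    exact ⟨{k | k < a}, measurableSet_lt measurable_id measurable_const, rfl⟩
  -- Step 3: single bin bound
  have h3 : ∀ i, μ {ω | Y i ω < a} ≤ ENNReal.ofReal (1 - q) := by
    intro i
    have hsub : {ω | Y i ω < a} ⊆ {ω | Y i ω = a}ᶜ := by
      intro ω hω; simp only [Set.mem_compl_iff, Set.mem_setOf_eq]
      exact Nat.ne_of_lt hω
    calc μ {ω | Y i ω < a} ≤ μ ({ω | Y i ω = a}ᶜ) := measure_mono hsub
      _ = 1 - μ {ω | Y i ω = a} := by
          have hms : MeasurableSet {ω | Y i ω = a} := (hmeas i) (measurableSet_singleton a)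
          rw [measure_compl hms (measure_ne_top μ _), measure_univ]
      _ = 1 - ENNReal.ofReal q := by rw [hY i a]
      _ = ENNReal.ofReal (1 - q) := by
          rw [ENNReal.ofReal_sub 1 hq0, ENNReal.ofReal_one]
  -- combine
  calc μ {ω | ∀ m ∈ S, X m ω < a}
      ≤ 2 * μ {ω | ∀ m ∈ S, Y m ω < a} := h1
    _ ≤ 2 * ∏ m ∈ S, ENNReal.ofReal (1 - q) := by
        rw [h2]; exact mul_le_mul_right (Finset.prod_le_prod' fun i _ => h3 i) 2
    _ = 2 * ENNReal.ofReal ((1 - q) ^ (S.card : ℕ)) := by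
        rw [Finset.prod_const, ← ENNReal.ofReal_pow (by linarith)]
    _ ≤ 2 * ENNReal.ofReal (Real.exp (-(r * S.card))) := by
        apply mul_le_mul_right
        apply ENNReal.ofReal_le_ofReal
        have hle : 1 - q ≤ Real.exp (-r) := by
          calc 1 - q ≤ 1 - r := by linarith
            _ ≤ Real.exp (-r) := by linarith [Real.add_one_le_exp (-r)]
        calc (1 - q) ^ S.card ≤ Real.exp (-r) ^ S.card :=
              pow_le_pow_left₀ (by linarith) hle _
          _ = Real.exp (-(r * S.card)) := by
              rw [← Real.exp_nat_mul]; ring_nf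
    _ = ENNReal.ofReal (2 * Real.exp (-(θ ^ a * (S.card : ℝ) / (Real.exp 1 * (a.factorial : ℝ))))) := by
        rw [ENNReal.ofReal_mul (by norm_num), ENNReal.ofReal_ofNat]
        congr 2
        rw [hrdef]; ring
end

section
/- Let X = (X_1,…,X_n) be the occupancy vector of ⌊θn⌋ balls thrown independently uniformly into n bins with θ ∈ [0,1], assuming the Poisson comparison inequality for monotone sets with i.i.d. Poisson(θ) variables Y_m. Then for any S ⊆ {1,…,n}: P(|{m ∈ S : X_m > 0}| ≤ θ|S|/(2e)) ≤ 2 exp(−θ²|S|/(2e²)). -/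
open MeasureTheory ProbabilityTheory Real

lemma aux_s_bound : Real.exp (-1) < 0.368 := by
  have h : (2.7182818283 : ℝ) < Real.exp 1 := Real.exp_one_gt_d9
  rw [Real.exp_neg]
  rw [inv_lt_comm₀ (by positivity) (by norm_num)]
  calc (0.368 : ℝ)⁻¹ < 2.7182818283 := by norm_num
    _ < Real.exp 1 := h

lemma aux_p_ge_q {θ : ℝ} (h0 : 0 ≤ θ) (h1 : θ ≤ 1) :
    θ / Real.exp 1 ≤ 1 - Real.exp (-θ) := by
  have hE : θ + 1 ≤ Real.exp θ := Real.add_one_le_exp θ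
  have hmul : Real.exp (-θ) * Real.exp θ = 1 := by
    rw [← Real.exp_add]; simp
  have hB : (2.7182818283 : ℝ) < Real.exp 1 := Real.exp_one_gt_d9
  have hs : Real.exp (-θ) ≤ 1 := Real.exp_le_one_iff.mpr (by linarith)
  have hspos : 0 < Real.exp (-θ) := Real.exp_pos _
  rw [div_le_iff₀ (Real.exp_pos 1)]
  nlinarith [Real.exp_pos θ]

lemma aux_one_sub {u : ℝ} (h0 : 0 ≤ u) (h1 : u ≤ 1) :
    1 - u ≤ Real.exp (-u - u ^ 2 / 2) := by
  have hb := Real.exp_bound' h0 h1 (n := 3) (by norm_num)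
  have hb' : Real.exp u ≤ 1 + u + u ^ 2 / 2 + u ^ 3 * (2/9) := by
    have : (∑ m ∈ Finset.range 3, u ^ m / m.factorial) = 1 + u + u ^ 2 / 2 := by
      simp [Finset.sum_range_succ]
    rw [this] at hb
    norm_num [Nat.factorial] at hb
    linarith
  have h2 : (1 - u) * Real.exp u ≤ 1 - u ^ 2 / 2 := by
    nlinarith [Real.exp_pos u, pow_nonneg h0 3, pow_nonneg h0 4]
  have h3 : 1 - u ^ 2 / 2 ≤ Real.exp (-(u ^ 2 / 2)) := by
    have := Real.add_one_le_exp (-(u ^ 2 / 2)); linarith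
  have hmul : Real.exp (-u) * Real.exp u = 1 := by rw [← Real.exp_add]; simp
  have : 1 - u ≤ Real.exp (-u) * (1 - u ^ 2 / 2) := by
    have hp := Real.exp_pos u
    have hq := Real.exp_pos (-u)
    nlinarith
  calc 1 - u ≤ Real.exp (-u) * (1 - u ^ 2 / 2) := this
    _ ≤ Real.exp (-u) * Real.exp (-(u ^ 2 / 2)) := by
        have hq := (Real.exp_pos (-u)).le
        nlinarith [Real.exp_pos (-(u ^ 2 / 2))]
    _ = Real.exp (-u - u ^ 2 / 2) := by rw [← Real.exp_add]; ring_nf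

lemma aux_exponent {θ : ℝ} (h0 : 0 ≤ θ) (h1 : θ ≤ 1) :
    (θ / Real.exp 1 + (θ / Real.exp 1) ^ 2) / 2 ≤
      θ / Real.exp 1 * (1 - Real.exp (-1)) +
        (θ / Real.exp 1 * (1 - Real.exp (-1))) ^ 2 / 2 := by
  set q := θ / Real.exp 1 with hq
  set s := Real.exp (-1) with hs
  have hs0 : 0 < s := Real.exp_pos _
  have hs1 : s < 0.368 := aux_s_bound
  have hq0 : 0 ≤ q := by positivity
  have hqs : q ≤ s := by
    rw [hq, hs, Real.exp_neg, ← one_div]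
    gcongr
  have hcubic : 0 ≤ 1/2 - s - s^2 + s^3/2 := by
    nlinarith [mul_nonneg (mul_nonneg hs0.le hs0.le) hs0.le,
      mul_nonneg hs0.le (sub_nonneg.2 hs1.le), sq_nonneg (s - 0.368)]
  have h₁ : 0 ≤ (s - q) * (q * (2*s - s^2)) :=
    mul_nonneg (by linarith) (mul_nonneg hq0 (by nlinarith))
  nlinarith [mul_nonneg hq0 hcubic, h₁]

/-- Per-bin bound: the Bernoulli mgf value is at most `exp (-(q+q²)/2)` with `q = θ/e`. -/
lemma aux_r_le {θ : ℝ} (h0 : 0 ≤ θ) (h1 : θ ≤ 1) :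
    Real.exp (-1) + (1 - Real.exp (-1)) * Real.exp (-θ) ≤
      Real.exp (-((θ / Real.exp 1 + (θ / Real.exp 1) ^ 2) / 2)) := by
  set q := θ / Real.exp 1 with hqdef
  set s := Real.exp (-1) with hsdef
  have hs0 : 0 < s := Real.exp_pos _
  have hs368 : s < 0.368 := aux_s_bound
  have hq0 : 0 ≤ q := by positivity
  have hq1 : q ≤ 1 := by
    have : q ≤ s := by
      rw [hqdef, hsdef, Real.exp_neg, ← one_div]; gcongr
    linarith
  have hp : q ≤ 1 - Real.exp (-θ) := aux_p_ge_q h0 h1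
  set u := q * (1 - s) with hudef
  have hu0 : 0 ≤ u := mul_nonneg hq0 (by linarith)
  have hu1 : u ≤ 1 := by nlinarith
  have hr1 : s + (1 - s) * Real.exp (-θ) ≤ 1 - u := by
    have hexpθ : 0 < Real.exp (-θ) := Real.exp_pos _
    nlinarith
  have hr2 : 1 - u ≤ Real.exp (-u - u ^ 2 / 2) := aux_one_sub hu0 hu1
  have hr3 : Real.exp (-u - u ^ 2 / 2) ≤ Real.exp (-((q + q ^ 2) / 2)) := by
    apply Real.exp_le_exp.mpr
    have := aux_exponent h0 h1
    rw [← hqdef, ← hsdef, ← hudef] at this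
    linarith
  linarith

/-- The Chernoff product bound. -/
lemma aux_pow_bound {θ : ℝ} (h0 : 0 ≤ θ) (h1 : θ ≤ 1) (k : ℕ) :
    Real.exp (θ * (k : ℝ) / (2 * Real.exp 1)) *
        (Real.exp (-1) + (1 - Real.exp (-1)) * Real.exp (-θ)) ^ k ≤
      Real.exp (-(θ ^ 2 * (k : ℝ) / (2 * Real.exp 1 ^ 2))) := by
  set r := Real.exp (-1) + (1 - Real.exp (-1)) * Real.exp (-θ) with hrdef
  have hs1 : Real.exp (-1) ≤ 1 := Real.exp_le_one_iff.mpr (by norm_num)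
  have hr0 : 0 ≤ r := by
    have := Real.exp_pos (-1)
    have := Real.exp_pos (-θ)
    nlinarith
  have hrle : r ≤ Real.exp (-((θ / Real.exp 1 + (θ / Real.exp 1) ^ 2) / 2)) :=
    aux_r_le h0 h1
  have hpow : r ^ k ≤ Real.exp ((k : ℝ) * (-((θ / Real.exp 1 + (θ / Real.exp 1) ^ 2) / 2))) := by
    rw [Real.exp_nat_mul]
    exact pow_le_pow_left₀ hr0 hrle k
  calc Real.exp (θ * (k : ℝ) / (2 * Real.exp 1)) * r ^ k
      ≤ Real.exp (θ * (k : ℝ) / (2 * Real.exp 1)) *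
          Real.exp ((k : ℝ) * (-((θ / Real.exp 1 + (θ / Real.exp 1) ^ 2) / 2))) := by
        exact mul_le_mul_of_nonneg_left hpow (Real.exp_pos _).le
    _ = Real.exp (θ * (k : ℝ) / (2 * Real.exp 1)
          + (k : ℝ) * (-((θ / Real.exp 1 + (θ / Real.exp 1) ^ 2) / 2))) := by
        rw [← Real.exp_add]
    _ = Real.exp (-(θ ^ 2 * (k : ℝ) / (2 * Real.exp 1 ^ 2))) := by
        congr 1
        have he : Real.exp 1 ≠ 0 := (Real.exp_pos 1).ne'
        field_simp
        ring

/-- Lemma 3 of the paper: saturation without retry.  With `X` the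
occupancy vector satisfying the Poisson comparison inequality against i.i.d.
Poisson(θ) variables `Y`, the number of nonempty bins of `S` is at least
`θ|S|/(2e)` except with probability `2 exp(−θ²|S|/(2e²))`. -/
theorem stmt_13 {Ω : Type*} [MeasurableSpace Ω] (μ : Measure Ω) [IsProbabilityMeasure μ]
    (n : ℕ) (θ : ℝ) (hθ0 : 0 ≤ θ) (hθ1 : θ ≤ 1)
    (X Y : Fin n → Ω → ℕ) (hmeas : ∀ i, Measurable (Y i))
    (hindep : iIndepFun Y μ)
    (hY : ∀ i (k : ℕ), μ {ω | Y i ω = k}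
      = ENNReal.ofReal (Real.exp (-θ) * θ ^ k / (k.factorial : ℝ)))
    (hcomp : ∀ S : Set (Fin n → ℕ),
      (∀ x ∈ S, ∀ y : Fin n → ℕ, (∀ i, y i ≤ x i) → y ∈ S) →
      μ {ω | (fun m => X m ω) ∈ S} ≤ 2 * μ {ω | (fun m => Y m ω) ∈ S})
    (S : Finset (Fin n)) :
    μ {ω | ((S.filter fun m => 0 < X m ω).card : ℝ) ≤ θ * (S.card : ℝ) / (2 * Real.exp 1)}
      ≤ ENNReal.ofReal
          (2 * Real.exp (-(θ ^ 2 * (S.card : ℝ) / (2 * Real.exp 1 ^ 2)))) := by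
  classical
  set c : ℝ := θ * (S.card : ℝ) / (2 * Real.exp 1) with hc
  set B : ℝ := Real.exp (-(θ ^ 2 * (S.card : ℝ) / (2 * Real.exp 1 ^ 2))) with hB
  -- the monotone decreasing set
  set E : Set (Fin n → ℕ) := {x | ((S.filter fun m => 0 < x m).card : ℝ) ≤ c} with hE
  have hEdec : ∀ x ∈ E, ∀ y : Fin n → ℕ, (∀ i, y i ≤ x i) → y ∈ E := by
    intro x hx y hxy
    simp only [hE, Set.mem_setOf_eq] at hx ⊢
    refine le_trans ?_ hx
    have hsub : (S.filter fun m => 0 < y m) ⊆ (S.filter fun m => 0 < x m) := by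
      intro m hm
      simp only [Finset.mem_filter] at hm ⊢
      exact ⟨hm.1, lt_of_lt_of_le hm.2 (hxy m)⟩
    exact_mod_cast Nat.cast_le.mpr (Finset.card_le_card hsub)
  have hXY := hcomp E hEdec
  -- the Bernoulli indicators
  set W : Fin n → Ω → ℝ :=
    fun m => (fun k : ℕ => if 0 < k then (1 : ℝ) else 0) ∘ Y m with hW
  have hWmeas : ∀ m, Measurable (W m) := fun m => measurable_from_top.comp (hmeas m)
  have hWindep : iIndepFun W μ :=
    hindep.comp _ (fun _ => measurable_from_top)
  -- events coincide
  have hYset : {ω | (fun m => Y m ω) ∈ E} = {ω | (∑ m ∈ S, W m) ω ≤ c} := by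
    ext ω
    simp only [Set.mem_setOf_eq, hE, Finset.sum_apply, hW, Function.comp]
    have : ∑ m ∈ S, (if 0 < Y m ω then (1 : ℝ) else 0)
        = ((S.filter fun m => 0 < Y m ω).card : ℝ) := by
      rw [Finset.card_filter]
      push_cast
      rfl
    rw [this]
  -- integrability of the exponential
  have hsum_meas : Measurable (∑ m ∈ S, W m) := by
    have hfe : (∑ m ∈ S, W m) = fun ω => ∑ m ∈ S, W m ω := by
      funext ω; simp [Finset.sum_apply]
    rw [hfe]
    exact Finset.measurable_sum _ fun m _ => hWmeas m
  have hsum_nonneg : ∀ ω, 0 ≤ (∑ m ∈ S, W m) ω := by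
    intro ω
    rw [Finset.sum_apply]
    refine Finset.sum_nonneg fun m _ => ?_
    simp only [hW, Function.comp]
    split <;> norm_num
  have hint : Integrable (fun ω => Real.exp ((-1) * (∑ m ∈ S, W m) ω)) μ := by
    refine Integrable.mono' (integrable_const 1)
      ((hsum_meas.const_mul (-1)).exp.aestronglyMeasurable) (ae_of_all _ fun ω => ?_)
    rw [Real.norm_eq_abs, abs_of_pos (Real.exp_pos _)]
    have : (-1 : ℝ) * (∑ m ∈ S, W m) ω ≤ 0 := by
      have := hsum_nonneg ω; linarith
    calc Real.exp _ ≤ Real.exp 0 := Real.exp_le_exp.mpr this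
      _ = 1 := Real.exp_zero
  -- Chernoff bound
  have hcher := measure_le_le_exp_mul_mgf (X := ∑ m ∈ S, W m) (μ := μ) c
    (t := -1) (by norm_num) hint
  -- compute each mgf
  have hmgf_each : ∀ m ∈ S, mgf (W m) μ (-1)
      = Real.exp (-1) + (1 - Real.exp (-1)) * Real.exp (-θ) := by
    intro m _
    have hA : MeasurableSet {ω | 0 < Y m ω} := (hmeas m) trivial
    have hAc : {ω | 0 < Y m ω} = {ω | Y m ω = 0}ᶜ := by
      ext ω; simp [Nat.pos_iff_ne_zero]
    have hμ0 : μ {ω | Y m ω = 0} = ENNReal.ofReal (Real.exp (-θ)) := by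
      have := hY m 0
      simpa using this
    have hle1 : ENNReal.ofReal (Real.exp (-θ)) ≤ 1 :=
      ENNReal.ofReal_le_one.mpr (Real.exp_le_one_iff.mpr (by linarith))
    have hμA : (μ {ω | 0 < Y m ω}).toReal = 1 - Real.exp (-θ) := by
      rw [hAc, prob_compl_eq_one_sub, hμ0]
      · rw [ENNReal.toReal_sub_of_le hle1 ENNReal.one_ne_top]
        simp [ENNReal.toReal_ofReal (Real.exp_pos (-θ)).le]
      · exact hmeas m (by trivial : MeasurableSet {k : ℕ | k = 0})
    have hfun : (fun ω => Real.exp ((-1) * W m ω))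
        = fun ω => Set.indicator {ω | 0 < Y m ω}
            (fun _ => Real.exp (-1) - 1) ω + 1 := by
      funext ω
      by_cases h : 0 < Y m ω
      · simp [hW, Function.comp, h, Set.indicator_of_mem, Set.mem_setOf_eq]
      · simp [hW, Function.comp, h, Set.indicator_of_notMem, Set.mem_setOf_eq]
    rw [mgf]
    rw [hfun]
    rw [integral_add ((integrable_const _).indicator hA) (integrable_const 1)]
    rw [integral_indicator_const _ hA, integral_const]
    simp only [measure_univ, ENNReal.toReal_one, probReal_univ, smul_eq_mul, one_mul, one_smul]
    rw [measureReal_def, hμA]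
    ring
  -- mgf of the sum
  have hmgf_sum : mgf (∑ m ∈ S, W m) μ (-1)
      = (Real.exp (-1) + (1 - Real.exp (-1)) * Real.exp (-θ)) ^ S.card := by
    rw [hWindep.mgf_sum hWmeas S]
    rw [Finset.prod_congr rfl hmgf_each, Finset.prod_const]
  -- put together the real bound
  have hreal : (μ {ω | (∑ m ∈ S, W m) ω ≤ c}).toReal ≤ B := by
    refine le_trans hcher ?_
    rw [hmgf_sum]
    have : -(-1 : ℝ) * c = c := by ring
    rw [this]
    exact aux_pow_bound hθ0 hθ1 S.card
  -- convert to ENNReal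
  have hY_ennreal : μ {ω | (fun m => Y m ω) ∈ E} ≤ ENNReal.ofReal B := by
    rw [hYset]
    calc μ {ω | (∑ m ∈ S, W m) ω ≤ c}
        = ENNReal.ofReal ((μ {ω | (∑ m ∈ S, W m) ω ≤ c}).toReal) :=
          (ENNReal.ofReal_toReal (measure_ne_top μ _)).symm
      _ ≤ ENNReal.ofReal B := ENNReal.ofReal_le_ofReal hreal
  calc μ {ω | ((S.filter fun m => 0 < X m ω).card : ℝ) ≤ c}
      = μ {ω | (fun m => X m ω) ∈ E} := rfl
    _ ≤ 2 * μ {ω | (fun m => Y m ω) ∈ E} := hXY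
    _ ≤ 2 * ENNReal.ofReal B := by gcongr
    _ = ENNReal.ofReal (2 * B) := by
        rw [ENNReal.ofReal_mul (by norm_num : (0:ℝ) ≤ 2)]
        norm_num
end

section
/- For all sufficiently large n, with ℓ = ⌊√(2 log n / log log n)⌋, ε ∈ (0,1), ρ > 0, ζ = ρ/(8eℓ), a = ⌈(2−ε)ℓ⌉ − k for some 1 ≤ k ≤ 2ℓ with a ≥ 1: ζ^{(k+1)(a+1)} · n / (e · a^a) ≥ n^{ε/3}. In particular exp(−ζ^{(k+1)(a+1)} n / (e a^a)) ≤ exp(−n^{ε/3}). -/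
open Real

set_option maxHeartbeats 1000000 in
/-- the key quantitative estimate in the one-step lemma:
`ζ^{(k+1)(a+1)} n / (e a^a) ≥ n^{ε/3}` for large `n`, where
`ℓ = ⌊√(2 log n / log log n)⌋`, `ζ = ρ/(8eℓ)` and `a = ⌈(2−ε)ℓ⌉ − k`. -/
theorem stmt_16 (ε ρ : ℝ) (hε0 : 0 < ε) (hε1 : ε < 1) (hρ : 0 < ρ) :
    ∃ N : ℕ, ∀ n : ℕ, N ≤ n →
    ∀ ℓ : ℕ, ℓ = ⌊Real.sqrt (2 * Real.log n / Real.log (Real.log n))⌋₊ →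
    ∀ ζ : ℝ, ζ = ρ / (8 * Real.exp 1 * (ℓ : ℝ)) →
    ∀ k : ℕ, 1 ≤ k → k ≤ 2 * ℓ →
    ∀ a : ℕ, a = ⌈(2 - ε) * (ℓ : ℝ)⌉₊ - k → 1 ≤ a →
      ((n : ℝ) ^ (ε / 3)
          ≤ ζ ^ ((k + 1) * (a + 1)) * (n : ℝ) / (Real.exp 1 * (a : ℝ) ^ a))
      ∧ Real.exp (-(ζ ^ ((k + 1) * (a + 1)) * (n : ℝ) / (Real.exp 1 * (a : ℝ) ^ a)))
          ≤ Real.exp (-((n : ℝ) ^ (ε / 3))) := by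
  have he1 : (2:ℝ) ≤ Real.exp 1 := by
    have := Real.add_one_le_exp 1; linarith only [this]
  set C : ℝ := 1 + Real.log 8 - Real.log ρ with hCdef
  set Cp : ℝ := max C 0 with hCpdef
  set D : ℝ := Cp + 1 with hDdef
  have hCp0 : 0 ≤ Cp := le_max_right _ _
  have hD1 : 1 ≤ D := by rw [hDdef]; linarith only [hCp0]
  set T : ℝ := max (24/ε) ρ with hTdef
  have hT24 : 24/ε ≤ T := le_max_left _ _
  have hTρ : ρ ≤ T := le_max_right _ _
  have hT0 : (0:ℝ) < T := lt_of_lt_of_le (by positivity) hT24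
  set L0 : ℝ := Real.exp (36*D/ε) + (432/ε)^4 + (T+2)^4 + 18/ε + Real.exp 2 with hL0def
  have hCCp : C ≤ Cp := le_max_left _ _
  clear_value C Cp D T L0
  refine ⟨⌈Real.exp L0⌉₊ + 1, ?_⟩
  intro n hn ℓ hℓ ζ hζ k hk1 hk2 a ha ha1
  -- n is large
  have hn0 : 0 < (n : ℝ) := by
    have : 1 ≤ n := le_trans (Nat.le_add_left 1 _) hn
    exact_mod_cast this
  have hLge : L0 ≤ Real.log n := by
    rw [Real.le_log_iff_exp_le hn0]
    calc Real.exp L0 ≤ (⌈Real.exp L0⌉₊ : ℝ) := Nat.le_ceil _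
      _ ≤ (n : ℝ) := by exact_mod_cast le_trans (Nat.le_succ _) hn
  set L : ℝ := Real.log n with hLdef
  clear_value L
  -- extract components of L0
  have h01 : (0:ℝ) ≤ Real.exp (36*D/ε) := (Real.exp_pos _).le
  have h02 : (0:ℝ) ≤ (432/ε)^4 := by positivity
  have h03 : (0:ℝ) ≤ (T+2)^4 := by positivity
  have h04 : (0:ℝ) ≤ 18/ε := by positivity
  have h05 : (0:ℝ) ≤ Real.exp 2 := (Real.exp_pos _).le
  rw [hL0def] at hLge
  have c1 : Real.exp (36*D/ε) ≤ L := by linarith only [hLge, h02, h03, h04, h05]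
  have c2 : (432/ε)^4 ≤ L := by linarith only [hLge, h01, h03, h04, h05]
  have c3 : (T+2)^4 ≤ L := by linarith only [hLge, h01, h02, h04, h05]
  have c4 : 18/ε ≤ L := by linarith only [hLge, h01, h02, h03, h05]
  have c5 : Real.exp 2 ≤ L := by linarith only [hLge, h01, h02, h03, h04]
  have hLpos : (0:ℝ) < L := lt_of_lt_of_le (Real.exp_pos _) c5
  have hlogL2 : (2:ℝ) ≤ Real.log L := by
    have := Real.log_le_log (Real.exp_pos 2) c5
    rwa [Real.log_exp] at this
  have hlogLpos : (0:ℝ) < Real.log L := by linarith only [hlogL2]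
  have hlogLD : 36*D/ε ≤ Real.log L := by
    have := Real.log_le_log (Real.exp_pos _) c1
    rwa [Real.log_exp] at this
  -- sqrt facts
  have hsL : Real.sqrt L * Real.sqrt L = L := Real.mul_self_sqrt hLpos.le
  have hssL : Real.sqrt (Real.sqrt L) * Real.sqrt (Real.sqrt L) = Real.sqrt L :=
    Real.mul_self_sqrt (Real.sqrt_nonneg _)
  have hsLpos : 0 < Real.sqrt L := Real.sqrt_pos.2 hLpos
  have hssLpos : 0 < Real.sqrt (Real.sqrt L) := Real.sqrt_pos.2 hsLpos
  -- log L ≤ 2 √L and ≤ 4 √√L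
  have hlog2s : Real.log L ≤ 2 * Real.sqrt L := by
    have h := Real.log_le_sub_one_of_pos hsLpos
    rw [Real.log_sqrt hLpos.le] at h
    linarith only [h]
  have hlog4s : Real.log L ≤ 4 * Real.sqrt (Real.sqrt L) := by
    have h := Real.log_le_sub_one_of_pos hssLpos
    rw [Real.log_sqrt (Real.sqrt_nonneg _), Real.log_sqrt hLpos.le] at h
    linarith only [h]
  -- √√L lower bounds from L ≥ X^4
  have sqrt4 : ∀ X : ℝ, 0 ≤ X → X^4 ≤ L → X ≤ Real.sqrt (Real.sqrt L) := by
    intro X hX hXL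
    rw [Real.le_sqrt hX (Real.sqrt_nonneg _), Real.le_sqrt (by positivity) hLpos.le]
    calc (X^2)^2 = X^4 := by ring
      _ ≤ L := hXL
  have h432 : 432/ε ≤ Real.sqrt (Real.sqrt L) := sqrt4 _ (by positivity) c2
  have hT2 : T + 2 ≤ Real.sqrt (Real.sqrt L) := sqrt4 _ (by positivity) c3
  -- ℓ bounds
  have harg0 : (0:ℝ) ≤ 2 * L / Real.log L := by positivity
  have hℓub : (ℓ:ℝ) ≤ Real.sqrt (2 * L / Real.log L) := by
    rw [hℓ]; exact Nat.floor_le (Real.sqrt_nonneg _)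
  have hℓlb : Real.sqrt (2 * L / Real.log L) < (ℓ:ℝ) + 1 := by
    rw [hℓ]; exact Nat.lt_floor_add_one _
  have hsmid : Real.sqrt L ≤ 2 * L / Real.log L := by
    rw [le_div_iff₀ hlogLpos]
    have h := mul_le_mul_of_nonneg_left hlog2s (Real.sqrt_nonneg L)
    linarith only [h, hsL]
  have hℓT : T + 1 ≤ (ℓ:ℝ) := by
    have h1 : Real.sqrt (Real.sqrt L) ≤ Real.sqrt (2 * L / Real.log L) :=
      Real.sqrt_le_sqrt hsmid
    linarith only [h1, hℓlb, hT2]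
  have hℓ1 : (1:ℝ) ≤ (ℓ:ℝ) := by linarith only [hℓT, hT0]
  have hℓpos : (0:ℝ) < (ℓ:ℝ) := by linarith only [hℓ1]
  have hεℓ : 24 ≤ ε * (ℓ:ℝ) := by
    have h24 : 24/ε ≤ (ℓ:ℝ) := by linarith only [hℓT, hT24]
    rw [div_le_iff₀ hε0] at h24; linarith only [h24]
  have hℓρ : ρ ≤ (ℓ:ℝ) := by linarith only [hℓT, hTρ]
  -- ζ facts
  have hζpos : 0 < ζ := by rw [hζ]; positivity
  have hζ1 : ζ ≤ 1 := by
    rw [hζ, div_le_one (by positivity)]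
    have h := mul_le_mul_of_nonneg_right he1 hℓpos.le
    linarith only [hℓρ, hℓpos, h]
  have hlogζ0 : 0 ≤ -Real.log ζ := by
    have := Real.log_nonpos hζpos.le hζ1; linarith only [this]
  have hlogζ : -Real.log ζ ≤ Real.log ℓ + Cp := by
    rw [hζ, Real.log_div (ne_of_gt hρ) (by positivity),
      Real.log_mul (by positivity) (ne_of_gt hℓpos),
      Real.log_mul (by norm_num) (ne_of_gt (Real.exp_pos 1)), Real.log_exp]
    have hc := hCCp
    rw [hCdef] at hc
    linarith only [hc]
  have hlogℓ0 : 0 ≤ Real.log ℓ := Real.log_nonneg hℓ1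
  -- a, k facts
  have hak : a + k = ⌈(2 - ε) * (ℓ:ℝ)⌉₊ := by omega
  have hceil : (⌈(2 - ε) * (ℓ:ℝ)⌉₊ : ℝ) < (2 - ε) * ℓ + 1 :=
    Nat.ceil_lt_add_one (mul_nonneg (by linarith only [hε1]) (Nat.cast_nonneg ℓ))
  have hac : (a:ℝ) + k < (2 - ε) * ℓ + 1 := by
    have hcast : ((a:ℝ) + (k:ℝ)) = (⌈(2 - ε) * (ℓ:ℝ)⌉₊ : ℝ) := by
      rw [← hak]; push_cast; ring
    linarith only [hcast, hceil]
  have hk1' : (1:ℝ) ≤ (k:ℝ) := by exact_mod_cast hk1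
  have ha1' : (1:ℝ) ≤ (a:ℝ) := by exact_mod_cast ha1
  have ha2ℓ : (a:ℝ) ≤ 2 * ℓ := by
    linarith only [hac, hk1', mul_nonneg hε0.le hℓpos.le]
  -- M bound
  have hM : (((k + 1) * (a + 1) : ℕ) : ℝ) ≤ (1 - ε/2) * (ℓ:ℝ)^2 := by
    push_cast
    have hsum : ((k:ℝ) + 1) + ((a:ℝ) + 1) ≤ (2-ε)*ℓ + 3 := by linarith only [hac]
    have hprod : ((k:ℝ)+1) * ((a:ℝ)+1) ≤ (((2-ε)*(ℓ:ℝ) + 3)/2)^2 := by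
      nlinarith only [sq_nonneg ((k:ℝ) - (a:ℝ)), hsum, hk1', ha1']
    have hquad : (((2-ε)*(ℓ:ℝ) + 3)/2)^2 ≤ (1 - ε/2) * (ℓ:ℝ)^2 := by
      have hA : 24*(ℓ:ℝ) ≤ ε*(ℓ:ℝ)*(ℓ:ℝ) := mul_le_mul_of_nonneg_right hεℓ hℓpos.le
      have hB : (0:ℝ) ≤ (ε*(ℓ:ℝ)^2)*(1-ε) :=
        mul_nonneg (mul_nonneg hε0.le (sq_nonneg _)) (by linarith only [hε1])
      have hC' : (0:ℝ) ≤ ε*(ℓ:ℝ) := mul_nonneg hε0.le hℓpos.le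
      nlinarith only [hA, hB, hC', hℓ1]
    calc ((k:ℝ)+1) * ((a:ℝ)+1) ≤ (((2-ε)*(ℓ:ℝ) + 3)/2)^2 := hprod
      _ ≤ (1 - ε/2) * (ℓ:ℝ)^2 := hquad
  -- ℓ² ≤ 2L/log L, log ℓ ≤ log L / 2 + 1
  have hℓsq : (ℓ:ℝ)^2 ≤ 2 * L / Real.log L := by
    have h := mul_le_mul hℓub hℓub hℓpos.le (Real.sqrt_nonneg _)
    linarith only [h, Real.mul_self_sqrt harg0]
  have hℓs2L : (ℓ:ℝ) ≤ Real.sqrt (2*L) := by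
    refine le_trans hℓub (Real.sqrt_le_sqrt ?_)
    rw [div_le_iff₀ hlogLpos]
    have h := mul_le_mul_of_nonneg_left hlogL2 (by linarith only [hLpos] : (0:ℝ) ≤ 2*L)
    linarith only [h, hLpos]
  have hlogℓ : Real.log ℓ ≤ Real.log L / 2 + 1 := by
    have h1 : Real.log ℓ ≤ Real.log (Real.sqrt (2*L)) :=
      Real.log_le_log hℓpos hℓs2L
    rw [Real.log_sqrt (by linarith only [hLpos]), Real.log_mul (by norm_num) (ne_of_gt hLpos)] at h1
    have hlog2 : Real.log 2 ≤ 1 := by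
      have := Real.log_le_sub_one_of_pos (by norm_num : (0:ℝ) < 2)
      linarith only [this]
    linarith only [h1, hlog2]
  -- main term bound
  have hstep : (((k + 1) * (a + 1) : ℕ) : ℝ) * (-Real.log ζ)
      ≤ (1 - ε/2) * L + (ε/18) * L := by
    have t1 : (((k + 1) * (a + 1) : ℕ) : ℝ) * (-Real.log ζ)
        ≤ ((1 - ε/2) * (ℓ:ℝ)^2) * (Real.log ℓ + Cp) := by
      apply mul_le_mul hM hlogζ hlogζ0
      exact mul_nonneg (by linarith only [hε1]) (sq_nonneg _)
    have t2 : (ℓ:ℝ)^2 * (Real.log ℓ + Cp) ≤ (2 * L / Real.log L) * (Real.log L / 2 + D) := by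
      apply mul_le_mul hℓsq ?_ (by linarith only [hlogℓ0, hCp0]) harg0
      rw [hDdef]; linarith only [hlogℓ]
    have t3 : (2 * L / Real.log L) * (Real.log L / 2 + D) = L + 2 * D * L / Real.log L := by
      have h0 : Real.log L ≠ 0 := ne_of_gt hlogLpos
      field_simp
    have t4 : 2 * D * L / Real.log L ≤ (ε/18) * L := by
      rw [div_le_iff₀ hlogLpos]
      have h36 : 36 * D ≤ ε * Real.log L := by
        rw [div_le_iff₀ hε0] at hlogLD; linarith only [hlogLD]
      have h := mul_le_mul_of_nonneg_right h36 hLpos.le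
      linarith only [h]
    have hd0 : 0 ≤ 2 * D * L / Real.log L := by positivity
    have t5 : (1 - ε/2) * ((ℓ:ℝ)^2 * (Real.log ℓ + Cp))
        ≤ (1 - ε/2) * (L + 2 * D * L / Real.log L) := by
      apply mul_le_mul_of_nonneg_left _ (by linarith only [hε1])
      rw [← t3]; exact t2
    have t6 : (1 - ε/2) * (L + 2 * D * L / Real.log L)
        ≤ (1 - ε/2) * L + 2 * D * L / Real.log L := by
      have h := mul_nonneg hε0.le hd0
      nlinarith only [h, hd0, hε0]
    calc (((k + 1) * (a + 1) : ℕ) : ℝ) * (-Real.log ζ)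
        ≤ ((1 - ε/2) * (ℓ:ℝ)^2) * (Real.log ℓ + Cp) := t1
      _ = (1 - ε/2) * ((ℓ:ℝ)^2 * (Real.log ℓ + Cp)) := by ring
      _ ≤ (1 - ε/2) * (L + 2 * D * L / Real.log L) := t5
      _ ≤ (1 - ε/2) * L + 2 * D * L / Real.log L := t6
      _ ≤ (1 - ε/2) * L + (ε/18) * L := by linarith only [t4]
  -- a log a bound
  have hloga : (a:ℝ) * Real.log a ≤ (ε/18) * L := by
    have h2 : Real.sqrt (2*L) ≤ Real.sqrt 2 * Real.sqrt L := by
      rw [← Real.sqrt_mul (by norm_num)]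
    have h3 : Real.sqrt 2 ≤ 1.5 := by
      rw [show (1.5:ℝ) = Real.sqrt (1.5^2) from (Real.sqrt_sq (by norm_num)).symm]
      apply Real.sqrt_le_sqrt; norm_num
    have ha3s : (a:ℝ) ≤ 3 * Real.sqrt L := by
      have h4 := mul_le_mul_of_nonneg_right h3 (Real.sqrt_nonneg L)
      linarith only [ha2ℓ, hℓs2L, h2, h4]
    have hloga2 : Real.log a ≤ 2 * Real.log L := by
      have ha0 : (0:ℝ) < (a:ℝ) := by linarith only [ha1']
      have h1 : Real.log a ≤ Real.log (3 * Real.sqrt L) := Real.log_le_log ha0 ha3s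
      rw [Real.log_mul (by norm_num) (ne_of_gt hsLpos), Real.log_sqrt hLpos.le] at h1
      have hlog3 : Real.log 3 ≤ 2 := by
        have := Real.log_le_sub_one_of_pos (by norm_num : (0:ℝ) < 3)
        linarith only [this]
      linarith only [h1, hlog3, hlogL2]
    have key : 24 ≤ (ε/18) * Real.sqrt (Real.sqrt L) := by
      rw [div_le_iff₀ hε0] at h432
      linarith only [h432]
    calc (a:ℝ) * Real.log a ≤ (3 * Real.sqrt L) * (2 * Real.log L) := by
          apply mul_le_mul ha3s hloga2 (Real.log_nonneg ha1') (by positivity)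
      _ ≤ (3 * Real.sqrt L) * (2 * (4 * Real.sqrt (Real.sqrt L))) := by
          apply mul_le_mul_of_nonneg_left (by linarith only [hlog4s]) (by positivity)
      _ = 24 * (Real.sqrt L * Real.sqrt (Real.sqrt L)) := by ring
      _ ≤ ((ε/18) * Real.sqrt (Real.sqrt L)) * (Real.sqrt L * Real.sqrt (Real.sqrt L)) := by
          apply mul_le_mul_of_nonneg_right key (by positivity)
      _ = (ε/18) * (Real.sqrt L * (Real.sqrt (Real.sqrt L) * Real.sqrt (Real.sqrt L))) := by ring
      _ = (ε/18) * L := by rw [hssL, hsL]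
  have hone : (1:ℝ) ≤ (ε/18) * L := by
    rw [div_le_iff₀ hε0] at c4
    linarith only [c4]
  -- the log inequality
  have hmain : L * (ε/3) ≤ (((k + 1) * (a + 1) : ℕ) : ℝ) * Real.log ζ
      + L - (1 + (a:ℝ) * Real.log a) := by
    linarith only [hstep, hloga, hone]
  -- conclude
  have ha0R : (0:ℝ) < (a:ℝ) := by linarith only [ha1']
  have hRpos : 0 < ζ ^ ((k + 1) * (a + 1)) * (n : ℝ) / (Real.exp 1 * (a : ℝ) ^ a) :=
    div_pos (mul_pos (pow_pos hζpos _) hn0) (mul_pos (Real.exp_pos 1) (pow_pos ha0R a))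
  have hgoal1 : (n : ℝ) ^ (ε / 3)
      ≤ ζ ^ ((k + 1) * (a + 1)) * (n : ℝ) / (Real.exp 1 * (a : ℝ) ^ a) := by
    rw [Real.rpow_def_of_pos hn0]
    calc Real.exp (Real.log n * (ε/3))
        ≤ Real.exp (Real.log (ζ ^ ((k + 1) * (a + 1)) * (n : ℝ) / (Real.exp 1 * (a : ℝ) ^ a))) := by
          rw [Real.exp_le_exp]
          rw [Real.log_div (ne_of_gt (mul_pos (pow_pos hζpos _) hn0))
              (ne_of_gt (mul_pos (Real.exp_pos 1) (pow_pos ha0R a))),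
            Real.log_mul (ne_of_gt (pow_pos hζpos _)) (ne_of_gt hn0),
            Real.log_mul (ne_of_gt (Real.exp_pos 1)) (ne_of_gt (pow_pos ha0R a)),
            Real.log_pow, Real.log_pow, Real.log_exp, ← hLdef]
          linarith only [hmain]
      _ = ζ ^ ((k + 1) * (a + 1)) * (n : ℝ) / (Real.exp 1 * (a : ℝ) ^ a) := Real.exp_log hRpos
  exact ⟨hgoal1, Real.exp_le_exp.2 (neg_le_neg hgoal1)⟩
end
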